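/- For all real α > 0 and z > 0, ( Γ(α + 1/2)·2^α / (z^α · Γ(1/2)) ) · ∫_0^∞ cos(z t)/(t² + 1)^{α + 1/2} dt = z^{−α} · ∫_0^∞ (2t)^{α−1} · e^{−( t + z²/(4t) )} dt. -/

import Mathlib

open Real MeasureTheory Set

lemma cosGauss_full (s z : ℝ) (hs : 0 < s) :
    ∫ x : ℝ, Real.cos (z * x) * Real.exp (-(s * x ^ 2)) =
      (π / s) ^ ((1:ℝ)/2) * Real.exp (-(z ^ 2 / (4 * s))) := by
  have hb : (-(s:ℂ)).re < 0 := by simpa using hs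
  have key := integral_cexp_quadratic hb ((z:ℂ) * Complex.I) 0
  have hint := integrable_cexp_quadratic' hb ((z:ℂ) * Complex.I) 0
  have hre : ∀ x : ℝ, (Complex.exp (-(s:ℂ) * (x:ℂ) ^ 2 + (z:ℂ) * Complex.I * (x:ℂ) + 0)).re
      = Real.cos (z * x) * Real.exp (-(s * x ^ 2)) := by
    intro x
    rw [Complex.exp_re]
    have h1 : (-(s:ℂ) * (x:ℂ) ^ 2 + (z:ℂ) * Complex.I * (x:ℂ) + 0).re = -(s * x ^ 2) := by
      simp [← Complex.ofReal_pow]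
    have h2 : (-(s:ℂ) * (x:ℂ) ^ 2 + (z:ℂ) * Complex.I * (x:ℂ) + 0).im = z * x := by
      simp [← Complex.ofReal_pow]
    rw [h1, h2, mul_comm]
  calc ∫ x : ℝ, Real.cos (z * x) * Real.exp (-(s * x ^ 2))
      = ∫ x : ℝ, (Complex.exp (-(s:ℂ) * (x:ℂ) ^ 2 + (z:ℂ) * Complex.I * (x:ℂ) + 0)).re := by
        simp_rw [hre]
    _ = (∫ x : ℝ, Complex.exp (-(s:ℂ) * (x:ℂ) ^ 2 + (z:ℂ) * Complex.I * (x:ℂ) + 0)).re :=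
        (integral_re hint)
    _ = (π / s) ^ ((1:ℝ)/2) * Real.exp (-(z ^ 2 / (4 * s))) := by
        rw [key]
        have h3 : ((π:ℂ) / -(-(s:ℂ))) = ((π / s : ℝ) : ℂ) := by push_cast; rw [neg_neg]
        have h4 : ((0:ℂ) - ((z:ℂ) * Complex.I) ^ 2 / (4 * (-(s:ℂ)))) =
            ((-(z ^ 2 / (4 * s)) : ℝ) : ℂ) := by
          have hs' : (s:ℂ) ≠ 0 := by exact_mod_cast hs.ne'
          rw [mul_pow, Complex.I_sq]
          push_cast
          field_simp
          ring
        rw [h3, h4,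
          show ((1:ℂ)/2) = (((1:ℝ)/2 : ℝ) : ℂ) by norm_num,
          ← Complex.ofReal_cpow (by positivity), ← Complex.ofReal_exp,
          ← Complex.ofReal_mul, Complex.ofReal_re]


lemma cosGauss (s z : ℝ) (hs : 0 < s) :
    ∫ t in Set.Ioi (0:ℝ), Real.cos (z * t) * Real.exp (-(s * t ^ 2)) =
      (π / s) ^ ((1:ℝ)/2) / 2 * Real.exp (-(z ^ 2 / (4 * s))) := by
  have habs := integral_comp_abs (f := fun x => Real.cos (z * x) * Real.exp (-(s * x ^ 2)))
  have heq : ∀ x : ℝ, Real.cos (z * |x|) * Real.exp (-(s * |x| ^ 2)) =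
      Real.cos (z * x) * Real.exp (-(s * x ^ 2)) := by
    intro x
    rcases abs_choice x with h | h
    · rw [h]
    · rw [h, mul_neg, Real.cos_neg, neg_pow]; norm_num
  simp_rw [heq] at habs
  rw [cosGauss_full s z hs] at habs
  linarith

lemma gammaAux (α : ℝ) (hα : 0 < α) (r : ℝ) (hr : 0 < r) :
    ∫ s in Set.Ioi (0:ℝ), s ^ (α - 1/2) * Real.exp (-(s * r)) =
      (1 / r) ^ (α + 1/2) * Real.Gamma (α + 1/2) := by
  have := Real.integral_rpow_mul_exp_neg_mul_Ioi (a := α + 1/2) (r := r)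
    (by linarith) hr
  rw [← this]
  refine setIntegral_congr_fun measurableSet_Ioi (fun s hs => ?_)
  rw [show α + 1/2 - 1 = α - 1/2 by ring, mul_comm s r]

lemma intAux (α : ℝ) (hα : 0 < α) (r : ℝ) (hr : 0 < r) :
    IntegrableOn (fun s : ℝ => s ^ (α - 1/2) * Real.exp (-(s * r))) (Set.Ioi 0) := by
  have h := integrableOn_rpow_mul_exp_neg_mul_rpow (p := 1) (s := α - 1/2) (b := r)
    (by linarith) one_pos hr
  refine h.congr_fun (fun s hs => ?_) measurableSet_Ioi
  simp only [Real.rpow_one]; ring_nf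

theorem basset_exponential_representation (α z : ℝ) (hα : 0 < α) (hz : 0 < z) :
    (Real.Gamma (α + 1/2) * 2 ^ α / (z ^ α * Real.Gamma (1/2))) *
        ∫ t in Set.Ioi (0:ℝ), Real.cos (z * t) / (t ^ 2 + 1) ^ (α + 1/2)
      = z ^ (-α) *
        ∫ t in Set.Ioi (0:ℝ), (2 * t) ^ (α - 1) * Real.exp (-(t + z ^ 2 / (4 * t))) := by
  have hΓ : 0 < Real.Gamma (α + 1/2) := Real.Gamma_pos_of_pos (by linarith)
  set f : ℝ → ℝ → ℝ :=
    fun t s => Real.cos (z * t) * (s ^ (α - 1/2) * Real.exp (-(s * (t ^ 2 + 1)))) with hf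
  have hsint : ∀ t : ℝ, (∫ s in Set.Ioi (0:ℝ), f t s)
      = Real.cos (z * t) * ((1 / (t ^ 2 + 1)) ^ (α + 1/2) * Real.Gamma (α + 1/2)) := by
    intro t
    rw [hf]
    simp only
    rw [integral_const_mul, gammaAux α hα _ (by positivity)]
  have hmeas : AEStronglyMeasurable (Function.uncurry f)
      ((volume.restrict (Set.Ioi 0)).prod (volume.restrict (Set.Ioi 0))) := by
    apply Measurable.aestronglyMeasurable
    unfold Function.uncurry
    fun_prop
  have cond1 : ∀ᵐ t ∂(volume.restrict (Set.Ioi (0:ℝ))),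
      Integrable (fun s => f t s) (volume.restrict (Set.Ioi (0:ℝ))) := by
    refine Filter.Eventually.of_forall fun t => ?_
    exact (intAux α hα (t ^ 2 + 1) (by positivity)).const_mul _
  have hnorm : ∀ t : ℝ, (∫ s in Set.Ioi (0:ℝ), ‖f t s‖)
      = |Real.cos (z * t)| * ((1 / (t ^ 2 + 1)) ^ (α + 1/2) * Real.Gamma (α + 1/2)) := by
    intro t
    have e : ∫ s in Set.Ioi (0:ℝ), ‖f t s‖ =
        ∫ s in Set.Ioi (0:ℝ), |Real.cos (z * t)| *
          (s ^ (α - 1/2) * Real.exp (-(s * (t ^ 2 + 1)))) := by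
      refine setIntegral_congr_fun measurableSet_Ioi fun s hs => ?_
      rw [hf]
      simp only [Real.norm_eq_abs, abs_mul,
        abs_of_nonneg (Real.rpow_nonneg (le_of_lt hs) (α - 1/2)),
        abs_of_nonneg (Real.exp_nonneg (-(s * (t ^ 2 + 1))))]
    rw [e, integral_const_mul, gammaAux α hα _ (by positivity)]
  have hbase : Integrable (fun t : ℝ => ((1:ℝ) + ‖t‖ ^ 2) ^ (-(2 * α + 1) / 2)) volume := by
    apply integrable_rpow_neg_one_add_norm_sq
    simp only [Module.finrank_self]
    push_cast
    linarith
  have hclosed : Integrable (fun t : ℝ => |Real.cos (z * t)| *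
      ((1 / (t ^ 2 + 1)) ^ (α + 1/2) * Real.Gamma (α + 1/2)))
      (volume.restrict (Set.Ioi (0:ℝ))) := by
    refine ((hbase.mul_const (Real.Gamma (α + 1/2))).restrict).mono' ?_ ?_
    · apply Measurable.aestronglyMeasurable
      fun_prop
    · refine Filter.Eventually.of_forall fun t => ?_
      have hpos : (0:ℝ) < t ^ 2 + 1 := by positivity
      have h1 : ((1:ℝ) / (t ^ 2 + 1)) ^ (α + 1/2) = ((1:ℝ) + ‖t‖ ^ 2) ^ (-(2 * α + 1) / 2) := by
        have hn : (1:ℝ) + ‖t‖ ^ 2 = t ^ 2 + 1 := by rw [Real.norm_eq_abs, sq_abs]; ring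
        rw [hn, one_div, Real.inv_rpow hpos.le, ← Real.rpow_neg hpos.le]
        congr 1
        ring
      rw [Real.norm_eq_abs, abs_of_nonneg (by positivity), ← h1]
      exact mul_le_of_le_one_left (by positivity) (Real.abs_cos_le_one _)
  have cond2 : Integrable (fun t => ∫ s in Set.Ioi (0:ℝ), ‖f t s‖)
      (volume.restrict (Set.Ioi (0:ℝ))) :=
    hclosed.congr (Filter.Eventually.of_forall fun t => (hnorm t).symm)
  have hF : Integrable (Function.uncurry f)
      ((volume.restrict (Set.Ioi 0)).prod (volume.restrict (Set.Ioi 0))) :=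
    (integrable_prod_iff hmeas).2 ⟨cond1, cond2⟩
  have swap := MeasureTheory.integral_integral_swap hF
  have hinner : ∀ s ∈ Set.Ioi (0:ℝ), (∫ t in Set.Ioi (0:ℝ), f t s)
      = π ^ ((1:ℝ)/2) / 2 * (s ^ (α - 1) * Real.exp (-(s + z ^ 2 / (4 * s)))) := by
    intro s hs
    have hs' : (0:ℝ) < s := hs
    have h1 : ∀ t : ℝ, f t s =
        (s ^ (α - 1/2) * Real.exp (-s)) * (Real.cos (z * t) * Real.exp (-(s * t ^ 2))) := by
      intro t
      rw [hf]
      simp only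
      rw [show -(s * (t ^ 2 + 1)) = -(s * t ^ 2) + -s by ring, Real.exp_add]
      ring
    simp_rw [h1]
    rw [integral_const_mul, cosGauss s z hs',
      Real.div_rpow Real.pi_pos.le hs'.le,
      show -(s + z ^ 2 / (4 * s)) = -s + -(z ^ 2 / (4 * s)) by ring, Real.exp_add]
    have hns : s ^ ((1:ℝ)/2) ≠ 0 := (Real.rpow_pos_of_pos hs' _).ne'
    have hkey : s ^ (α - 1/2) = s ^ (α - 1) * s ^ ((1:ℝ)/2) := by
      rw [← Real.rpow_add hs']
      congr 1
      ring
    rw [hkey]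
    field_simp
  have hL : (∫ t in Set.Ioi (0:ℝ), Real.cos (z * t) / (t ^ 2 + 1) ^ (α + 1/2))
      = (Real.Gamma (α + 1/2))⁻¹ * (π ^ ((1:ℝ)/2) / 2 *
          ∫ s in Set.Ioi (0:ℝ), s ^ (α - 1) * Real.exp (-(s + z ^ 2 / (4 * s)))) := by
    have e1 : (∫ t in Set.Ioi (0:ℝ), Real.cos (z * t) / (t ^ 2 + 1) ^ (α + 1/2))
        = ∫ t in Set.Ioi (0:ℝ), (Real.Gamma (α + 1/2))⁻¹ * ∫ s in Set.Ioi (0:ℝ), f t s := by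
      refine setIntegral_congr_fun measurableSet_Ioi fun t ht => ?_
      have hX : ((1:ℝ) / (t ^ 2 + 1)) ^ (α + 1/2) = ((t ^ 2 + 1) ^ (α + 1/2))⁻¹ := by
        rw [one_div, Real.inv_rpow (by positivity)]
      rw [hsint t, hX]
      have hY : ((t:ℝ) ^ 2 + 1) ^ (α + 1/2) ≠ 0 := (Real.rpow_pos_of_pos (by positivity) _).ne'
      field_simp
    rw [e1, integral_const_mul, swap]
    congr 1
    rw [setIntegral_congr_fun measurableSet_Ioi hinner, integral_const_mul]
  have hR : (∫ t in Set.Ioi (0:ℝ), (2 * t) ^ (α - 1) * Real.exp (-(t + z ^ 2 / (4 * t))))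
      = 2 ^ (α - 1) * ∫ t in Set.Ioi (0:ℝ), t ^ (α - 1) * Real.exp (-(t + z ^ 2 / (4 * t))) := by
    rw [← integral_const_mul]
    refine setIntegral_congr_fun measurableSet_Ioi fun t ht => ?_
    rw [Real.mul_rpow (by norm_num) (le_of_lt ht)]
    ring
  rw [hL, hR, Real.Gamma_one_half_eq, Real.sqrt_eq_rpow, Real.rpow_neg hz.le,
    Real.rpow_sub two_pos, Real.rpow_one]
  have h2 : z ^ α ≠ 0 := (Real.rpow_pos_of_pos hz _).ne'
  have h3 : π ^ ((1:ℝ)/2) ≠ 0 := (Real.rpow_pos_of_pos Real.pi_pos _).ne'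
  generalize (∫ t in Set.Ioi (0:ℝ), t ^ (α - 1) * Real.exp (-(t + z ^ 2 / (4 * t)))) = I
  field_simp
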